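/- Let X₁,…,X_n be metric spaces each satisfying the discretization assumption with encoders φ^i_q : X_i → ℝ^{κ_i(q)} and projections P^i_q converging uniformly to the identity on compacts, and let Y be a Banach space. Let K_i ⊂ X_i be compact and G : K₁ × ⋯ × K_n → Y continuous. Then for every ε > 0 there exist p and q_i ∈ ℕ, continuous functions g^i_j ∈ C(ℝ^{κ_i(q_i)}) and u_j ∈ Y, such that sup ‖G(v₁,…,v_n) − Σ_{j=1}^p g^1_j(φ^1_{q₁}(v₁))⋯g^n_j(φ^n_{q_n}(v_n))·u_j‖_Y < ε uniformly over v_i ∈ K_i. -/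

import Mathlib

open Finset in
private lemma prod_pert_bound {ι : Type*} (s : Finset ι) (a b : ι → ℝ) (C η : ℝ)
    (hC : 1 ≤ C) (hη : 0 ≤ η)
    (ha : ∀ i ∈ s, |a i| ≤ C) (hb : ∀ i ∈ s, |b i| ≤ C)
    (hab : ∀ i ∈ s, |a i - b i| ≤ η) :
    |∏ i ∈ s, a i - ∏ i ∈ s, b i| ≤ s.card * η * C ^ s.card := by
  classical
  induction s using Finset.induction_on with
  | empty => simp
  | insert x s hx ih =>
    have ha' : ∀ i ∈ s, |a i| ≤ C := fun i hi => ha i (mem_insert_of_mem hi)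
    have hb' : ∀ i ∈ s, |b i| ≤ C := fun i hi => hb i (mem_insert_of_mem hi)
    have hab' : ∀ i ∈ s, |a i - b i| ≤ η := fun i hi => hab i (mem_insert_of_mem hi)
    have IH := ih ha' hb' hab'
    rw [Finset.prod_insert hx, Finset.prod_insert hx, Finset.card_insert_of_notMem hx]
    have hPa : |∏ i ∈ s, a i| ≤ C ^ s.card := by
      rw [Finset.abs_prod]
      calc ∏ i ∈ s, |a i| ≤ ∏ _i ∈ s, C :=
            Finset.prod_le_prod (fun i _ => abs_nonneg _) ha'
        _ = C ^ s.card := by rw [Finset.prod_const]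
    have key : a x * ∏ i ∈ s, a i - b x * ∏ i ∈ s, b i
        = (a x - b x) * ∏ i ∈ s, a i + b x * (∏ i ∈ s, a i - ∏ i ∈ s, b i) := by ring
    rw [key]
    have h1 : |(a x - b x) * ∏ i ∈ s, a i| ≤ η * C ^ s.card := by
      rw [abs_mul]
      exact mul_le_mul (hab x (mem_insert_self x s)) hPa (abs_nonneg _) hη
    have h2 : |b x * (∏ i ∈ s, a i - ∏ i ∈ s, b i)| ≤ C * (s.card * η * C ^ s.card) := by
      rw [abs_mul]
      exact mul_le_mul (hb x (mem_insert_self x s)) IH (abs_nonneg _) (by linarith)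
    have hpow : (C : ℝ) ^ s.card ≤ C ^ (s.card + 1) :=
      pow_le_pow_right₀ hC (Nat.le_succ _)
    have hpownn : (0:ℝ) ≤ C ^ s.card := by positivity
    calc |(a x - b x) * ∏ i ∈ s, a i + b x * (∏ i ∈ s, a i - ∏ i ∈ s, b i)|
        ≤ η * C ^ s.card + C * (s.card * η * C ^ s.card) :=
          (abs_add_le _ _).trans (add_le_add h1 h2)
      _ ≤ (s.card + 1 : ℕ) * η * C ^ (s.card + 1) := by
          push_cast
          have hcnn : (0:ℝ) ≤ (s.card : ℝ) := Nat.cast_nonneg _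
          have : C * (s.card * η * C ^ s.card) = (s.card : ℝ) * η * C ^ (s.card + 1) := by
            ring
          rw [this]
          have h3 : η * C ^ s.card ≤ η * C ^ (s.card + 1) :=
            mul_le_mul_of_nonneg_left hpow hη
          nlinarith [mul_nonneg hη hpownn]

private lemma unif_near {X : Type*} [PseudoMetricSpace X] {Z : Type*} [PseudoMetricSpace Z]
    {K : Set X} (hK : IsCompact K) {f : X → Z} (hf : Continuous f)
    {ε : ℝ} (hε : 0 < ε) :
    ∃ δ > 0, ∀ x ∈ K, ∀ y, dist x y < δ → dist (f x) (f y) < ε := by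
  obtain ⟨δ, hδ, hcov⟩ := lebesgue_number_lemma_of_metric hK
      (c := fun x : X => f ⁻¹' Metric.ball (f x) (ε/2))
      (fun x => Metric.isOpen_ball.preimage hf)
      (fun x _ => Set.mem_iUnion.2 ⟨x, by simp [Metric.mem_ball, hε]⟩)
  refine ⟨δ, hδ, fun x hx y hxy => ?_⟩
  obtain ⟨c, hc⟩ := hcov x hx
  have h1 : dist (f x) (f c) < ε/2 := hc (Metric.mem_ball_self hδ)
  have h2 : dist (f y) (f c) < ε/2 := hc (by rw [Metric.mem_ball, dist_comm]; exact hxy)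
  calc dist (f x) (f y) ≤ dist (f x) (f c) + dist (f c) (f y) := dist_triangle _ _ _
    _ < ε/2 + ε/2 := add_lt_add h1 (by rw [dist_comm]; exact h2)
    _ = ε := add_halves ε

section Tensor

variable {n : ℕ} {X : Fin n → Type*} [∀ i, TopologicalSpace (X i)]
  {Y : Type*} [NormedAddCommGroup Y] [NormedSpace ℝ Y]
  {S : Set (∀ i, X i)}

private def IsT (S : Set (∀ i, X i)) (F : S → ℝ) : Prop :=
  ∃ p, ∃ f : ∀ i, Fin p → C(X i, ℝ), ∀ v : S, F v = ∑ j : Fin p, ∏ i, (f i j) (v.1 i)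

private def IsYT (S : Set (∀ i, X i)) (F : S → Y) : Prop :=
  ∃ p, ∃ f : ∀ i, Fin p → C(X i, ℝ), ∃ u : Fin p → Y,
    ∀ v : S, F v = ∑ j : Fin p, (∏ i, (f i j) (v.1 i)) • u j

private lemma IsT_add {F G : S → ℝ} (hF : IsT S F) (hG : IsT S G) :
    IsT S (fun v => F v + G v) := by
  obtain ⟨p₁, f₁, h₁⟩ := hF
  obtain ⟨p₂, f₂, h₂⟩ := hG
  refine ⟨p₁ + p₂, fun i => Fin.append (f₁ i) (f₂ i), fun v => ?_⟩
  rw [Fin.sum_univ_add]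
  simp only [Fin.append_left, Fin.append_right]
  rw [h₁ v, h₂ v]

private lemma IsT_mul {F G : S → ℝ} (hF : IsT S F) (hG : IsT S G) :
    IsT S (fun v => F v * G v) := by
  obtain ⟨p₁, f₁, h₁⟩ := hF
  obtain ⟨p₂, f₂, h₂⟩ := hG
  refine ⟨p₁ * p₂,
    fun i j => f₁ i (finProdFinEquiv.symm j).1 * f₂ i (finProdFinEquiv.symm j).2,
    fun v => ?_⟩
  show F v * G v = _
  rw [h₁ v, h₂ v, Finset.sum_mul_sum]
  rw [← Equiv.sum_comp (finProdFinEquiv : Fin p₁ × Fin p₂ ≃ Fin (p₁ * p₂))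
    (fun j => ∏ i, (f₁ i (finProdFinEquiv.symm j).1 * f₂ i (finProdFinEquiv.symm j).2) (v.1 i))]
  rw [Fintype.sum_prod_type]
  refine Finset.sum_congr rfl fun j₁ _ => Finset.sum_congr rfl fun j₂ _ => ?_
  simp only [Equiv.symm_apply_apply, ContinuousMap.mul_apply]
  rw [Finset.prod_mul_distrib]

private lemma IsT_const (hn : 0 < n) (r : ℝ) : IsT S (fun _ => r) := by
  classical
  refine ⟨1, fun i _ => Function.update (fun i' => (1 : C(X i', ℝ))) ⟨0, hn⟩
      (ContinuousMap.const (X ⟨0, hn⟩) r) i, fun v => ?_⟩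
  rw [Fin.sum_univ_one]
  rw [Finset.prod_eq_single_of_mem ⟨0, hn⟩ (Finset.mem_univ _)]
  · simp
  · intro b _ hb
    beta_reduce
    rw [Function.update_of_ne hb]
    simp

private lemma IsT_coord (hn : 0 < n) (i : Fin n) (f0 : C(X i, ℝ)) :
    IsT S (fun v => f0 (v.1 i)) := by
  classical
  refine ⟨1, fun i' _ => Function.update (fun i'' => (1 : C(X i'', ℝ))) i f0 i', fun v => ?_⟩
  rw [Fin.sum_univ_one]
  rw [Finset.prod_eq_single_of_mem i (Finset.mem_univ _)]
  · simp
  · intro b _ hb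
    beta_reduce
    rw [Function.update_of_ne hb]
    simp

private lemma IsYT_smul {F : S → ℝ} (hF : IsT S F) (y : Y) :
    IsYT S (fun v => F v • y) := by
  obtain ⟨p, f, h⟩ := hF
  exact ⟨p, f, fun _ => y, fun v => by show F v • y = _; rw [h v, Finset.sum_smul]⟩

private lemma IsYT_add {F G : S → Y} (hF : IsYT S F) (hG : IsYT S G) :
    IsYT S (fun v => F v + G v) := by
  obtain ⟨p₁, f₁, u₁, h₁⟩ := hF
  obtain ⟨p₂, f₂, u₂, h₂⟩ := hG
  refine ⟨p₁ + p₂, fun i => Fin.append (f₁ i) (f₂ i), Fin.append u₁ u₂, fun v => ?_⟩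
  rw [Fin.sum_univ_add]
  simp only [Fin.append_left, Fin.append_right]
  rw [h₁ v, h₂ v]

private lemma IsYT_sum {ι : Type*} (s : Finset ι) (H : ι → S → Y)
    (h : ∀ c ∈ s, IsYT S (H c)) : IsYT S (fun v => ∑ c ∈ s, H c v) := by
  classical
  induction s using Finset.induction_on with
  | empty => exact ⟨0, fun i => Fin.elim0, Fin.elim0, fun v => by simp⟩
  | insert x s hx ih =>
    simp only [Finset.sum_insert hx]
    exact IsYT_add (h x (Finset.mem_insert_self x s))
      (ih fun c hc => h c (Finset.mem_insert_of_mem hc))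

end Tensor

set_option maxHeartbeats 1600000 in
private lemma tensor_approx {n : ℕ} (hn : 0 < n) {X : Fin n → Type*} [∀ i, MetricSpace (X i)]
    {Y : Type*} [NormedAddCommGroup Y] [NormedSpace ℝ Y]
    (K : ∀ i, Set (X i)) (hK : ∀ i, IsCompact (K i))
    (G : (∀ i, X i) → Y) (hG : ContinuousOn G (Set.univ.pi K))
    (ε : ℝ) (hε : 0 < ε) :
    ∃ (p : ℕ) (f : ∀ i : Fin n, Fin p → C(X i, ℝ)) (u : Fin p → Y),
      ∀ v ∈ Set.univ.pi K, ‖G v - ∑ j : Fin p, (∏ i : Fin n, (f i j) (v i)) • u j‖ < ε := by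
  classical
  set S := Set.univ.pi K with hSdef
  have hS : IsCompact S := isCompact_univ_pi hK
  by_cases hne : S.Nonempty
  swap
  · exact ⟨1, fun _ _ => 1, fun _ => 0, fun v hv => absurd ⟨v, hv⟩ hne⟩
  haveI : CompactSpace ↥S := isCompact_iff_compactSpace.mp hS
  -- uniform continuity of G on S
  have hGu := hS.uniformContinuousOn_of_continuous hG
  rw [Metric.uniformContinuousOn_iff] at hGu
  obtain ⟨δ, hδ, hGδ⟩ := hGu (ε/3) (by positivity)
  -- finite cover by balls
  obtain ⟨t0, ht0S, ht0fin, ht0cov⟩ := finite_cover_balls_of_compact hS (half_pos hδ)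
  set t : Finset (∀ i, X i) := ht0fin.toFinset with htdef
  have htS : ∀ c ∈ t, c ∈ S := fun c hc => ht0S (ht0fin.mem_toFinset.mp hc)
  have htcov : ∀ v ∈ S, ∃ c ∈ t, dist v c < δ/2 := by
    intro v hv
    obtain ⟨c, hc, hvc⟩ := Set.mem_iUnion₂.mp (ht0cov hv)
    exact ⟨c, ht0fin.mem_toFinset.mpr hc, hvc⟩
  have htne : t.Nonempty := by
    obtain ⟨v, hv⟩ := hne
    obtain ⟨c, hc, _⟩ := htcov v hv
    exact ⟨c, hc⟩
  have hm : 0 < (t.card : ℝ) := by exact_mod_cast Finset.card_pos.mpr htne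
  -- partition functions
  set ρ : (∀ i, X i) → (∀ i, X i) → ℝ := fun c v => max (δ/2 - dist v c) 0 with hρdef
  have hρcont : ∀ c, Continuous (ρ c) :=
    fun c => (continuous_const.sub (continuous_id.dist continuous_const)).max continuous_const
  have hρnn : ∀ c v, 0 ≤ ρ c v := fun c v => le_max_right _ _
  set R : (∀ i, X i) → ℝ := fun v => ∑ c ∈ t, ρ c v with hRdef
  have hRcont : Continuous R := continuous_finset_sum _ fun c _ => hρcont c
  have hRpos : ∀ v ∈ S, 0 < R v := by
    intro v hv
    obtain ⟨c, hc, hvc⟩ := htcov v hv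
    exact Finset.sum_pos' (fun c' _ => hρnn c' v)
      ⟨c, hc, lt_max_iff.mpr (Or.inl (by linarith))⟩
  -- the normalized partition of unity, as functions on S
  set lam : (∀ i, X i) → ↥S → ℝ := fun c v => ρ c v.1 / R v.1 with hlamdef
  have hlamcont : ∀ c, Continuous (lam c) := by
    intro c
    exact ((hρcont c).comp continuous_subtype_val).div
      (hRcont.comp continuous_subtype_val) (fun v => (hRpos v.1 v.2).ne')
  have hlamnn : ∀ c v, 0 ≤ lam c v :=
    fun c v => div_nonneg (hρnn c v.1) (hRpos v.1 v.2).le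
  have hlamsum : ∀ v : ↥S, ∑ c ∈ t, lam c v = 1 := by
    intro v
    rw [hlamdef]
    simp only
    rw [← Finset.sum_div, div_self (hRpos v.1 v.2).ne']
  -- step 1 : ‖G v - ∑ lam c v • G c‖ ≤ ε/3
  have step1 : ∀ v : ↥S, ‖G v.1 - ∑ c ∈ t, lam c v • G c‖ ≤ ε/3 := by
    intro v
    have hGv : G v.1 = ∑ c ∈ t, lam c v • G v.1 := by
      rw [← Finset.sum_smul, hlamsum, one_smul]
    calc ‖G v.1 - ∑ c ∈ t, lam c v • G c‖
        = ‖∑ c ∈ t, (lam c v • G v.1 - lam c v • G c)‖ := by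
          rw [Finset.sum_sub_distrib, ← hGv]
      _ ≤ ∑ c ∈ t, ‖lam c v • G v.1 - lam c v • G c‖ := norm_sum_le _ _
      _ ≤ ∑ c ∈ t, lam c v * (ε/3) := by
          refine Finset.sum_le_sum fun c hc => ?_
          rw [← smul_sub, norm_smul, Real.norm_eq_abs, abs_of_nonneg (hlamnn c v)]
          rcases eq_or_lt_of_le (hρnn c v.1) with h0 | h0
          · rw [hlamdef]
            simp only
            rw [← h0, zero_div, zero_mul, zero_mul]
          · have hdist : dist v.1 c < δ := by
              have : 0 < δ/2 - dist v.1 c := by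
                by_contra h
                push_neg at h
                rw [hρdef] at h0
                simp only at h0
                rw [max_eq_right (by linarith)] at h0
                exact lt_irrefl 0 h0
              linarith
            have := hGδ v.1 v.2 c (htS c hc) hdist
            rw [dist_eq_norm] at this
            exact mul_le_mul_of_nonneg_left this.le (hlamnn c v)
      _ = ε/3 := by rw [← Finset.sum_mul, hlamsum, one_mul]
  -- Stone–Weierstrass setup
  set coordMap : ∀ i : Fin n, C(↥S, X i) :=
    fun i => ⟨fun v => v.1 i, (continuous_apply i).comp continuous_subtype_val⟩ with hcoord
  set A : Subalgebra ℝ C(↥S, ℝ) :=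
    Algebra.adjoin ℝ (⋃ i, Set.range (fun f0 : C(X i, ℝ) => f0.comp (coordMap i))) with hAdef
  have sep : A.SeparatesPoints := by
    intro v w hvw
    have hvw' : (v : ∀ i, X i) ≠ w := fun h => hvw (Subtype.ext h)
    obtain ⟨i, hi⟩ := Function.ne_iff.mp hvw'
    set f0 : C(X i, ℝ) := ⟨fun x => dist x (w.1 i), continuous_id.dist continuous_const⟩
    refine ⟨⇑(f0.comp (coordMap i)), Set.mem_image_of_mem _
      (Algebra.subset_adjoin (Set.mem_iUnion.2 ⟨i, Set.mem_range.2 ⟨f0, rfl⟩⟩)), ?_⟩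
    simp only [ContinuousMap.comp_apply, hcoord, ContinuousMap.coe_mk, f0]
    rw [dist_self]
    exact dist_ne_zero.mpr hi
  -- every element of A is a tensor
  have hrep : ∀ F ∈ A, IsT S ⇑F := by
    intro F hF
    rw [hAdef] at hF
    induction hF using Algebra.adjoin_induction with
    | mem x hx =>
      obtain ⟨sι, ⟨i, rfl⟩, hx⟩ := hx
      obtain ⟨f0, rfl⟩ := hx
      exact IsT_coord hn i f0
    | algebraMap r =>
      have : ⇑(algebraMap ℝ C(↥S, ℝ) r) = fun _ : ↥S => r := by
        ext v; simp [Algebra.algebraMap_eq_smul_one]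
      rw [this]
      exact IsT_const hn r
    | add x y hx hy ihx ihy =>
      have : ⇑(x + y) = fun v => x v + y v := rfl
      rw [this]
      exact IsT_add ihx ihy
    | mul x y hx hy ihx ihy =>
      have : ⇑(x * y) = fun v => x v * y v := rfl
      rw [this]
      exact IsT_mul ihx ihy
  -- approximate each lam c by a tensor
  have hηpos : ∀ c : ∀ i, X i, 0 < ε / (3 * t.card * (1 + ‖G c‖)) := by
    intro c
    have : 0 < 1 + ‖G c‖ := by positivity
    positivity
  have key : ∀ c : ∀ i, X i, ∃ F : ↥S → ℝ, IsT S F ∧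
      ∀ v : ↥S, |F v - lam c v| ≤ ε / (3 * t.card * (1 + ‖G c‖)) := by
    intro c
    obtain ⟨⟨F, hFA⟩, hFnear⟩ :=
      ContinuousMap.exists_mem_subalgebra_near_continuous_of_separatesPoints A sep
        (lam c) (hlamcont c) _ (hηpos c)
    exact ⟨⇑F, hrep F hFA, fun v => by
      have := hFnear v
      rw [Real.norm_eq_abs] at this
      exact this.le⟩
  choose Fc hFcT hFcnear using key
  -- assemble
  have hyt : IsYT S (fun v => ∑ c ∈ t, Fc c v • G c) :=
    IsYT_sum t (fun c v => Fc c v • G c) (fun c _ => IsYT_smul (hFcT c) (G c))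
  obtain ⟨p, f, u, hpfu⟩ := hyt
  refine ⟨p, f, u, fun v hv => ?_⟩
  have hv' : v ∈ S := hv
  set vS : ↥S := ⟨v, hv'⟩
  have h2 : ‖∑ c ∈ t, lam c vS • G c - ∑ c ∈ t, Fc c vS • G c‖ ≤ ε/3 := by
    calc ‖∑ c ∈ t, lam c vS • G c - ∑ c ∈ t, Fc c vS • G c‖
        = ‖∑ c ∈ t, (lam c vS - Fc c vS) • G c‖ := by
          rw [← Finset.sum_sub_distrib]
          congr 1
          refine Finset.sum_congr rfl fun c _ => ?_
          rw [sub_smul]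
      _ ≤ ∑ c ∈ t, ‖(lam c vS - Fc c vS) • G c‖ := norm_sum_le _ _
      _ ≤ ∑ c ∈ t, (ε / (3 * t.card)) := by
          refine Finset.sum_le_sum fun c hc => ?_
          rw [norm_smul, Real.norm_eq_abs, abs_sub_comm]
          have h1 := hFcnear c vS
          have hGc : (0:ℝ) ≤ ‖G c‖ := norm_nonneg _
          have h1G : 0 < 1 + ‖G c‖ := by positivity
          calc |Fc c vS - lam c vS| * ‖G c‖
              ≤ (ε / (3 * t.card * (1 + ‖G c‖))) * ‖G c‖ :=
                mul_le_mul_of_nonneg_right h1 hGc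
            _ ≤ ε / (3 * t.card) := by
                rw [div_mul_eq_mul_div, div_le_div_iff₀ (by positivity) (by positivity)]
                ring_nf
                nlinarith [mul_nonneg (mul_nonneg hε.le hm.le) hGc]
      _ = ε/3 := by
          rw [Finset.sum_const, nsmul_eq_mul]
          field_simp
  have hfinal : ‖G v - ∑ j : Fin p, (∏ i, (f i j) (v i)) • u j‖ ≤ ε/3 + ε/3 := by
    have := hpfu vS
    calc ‖G v - ∑ j : Fin p, (∏ i, (f i j) (v i)) • u j‖
        = ‖(G v - ∑ c ∈ t, lam c vS • G c)
            + (∑ c ∈ t, lam c vS • G c - ∑ c ∈ t, Fc c vS • G c)‖ := by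
          rw [sub_add_sub_cancel]
          congr 1
          rw [← this]
      _ ≤ ‖G v - ∑ c ∈ t, lam c vS • G c‖
            + ‖∑ c ∈ t, lam c vS • G c - ∑ c ∈ t, Fc c vS • G c‖ := norm_add_le _ _
      _ ≤ ε/3 + ε/3 := add_le_add (step1 vS) h2
  calc ‖G v - ∑ j : Fin p, (∏ i, (f i j) (v i)) • u j‖ ≤ ε/3 + ε/3 := hfinal
    _ < ε := by linarith

set_option maxHeartbeats 1600000

/-- MIONet approximation theorem on metric spaces (Theorem C.1).
`X i` are metric spaces, each with a discretization system (encoders `φ i q`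
continuous into `ℝ^{κ i q}`, decoders `ψ i q` continuous on the encoder image,
projections converging uniformly to the identity on compacts); `Y` is a Banach
space; `K i ⊆ X i` compact, `G` continuous on `K₁ × ⋯ × Kₙ`. For every `ε > 0`
there exist `p`, `q i`, continuous `g i j : ℝ^{κ i (q i)} → ℝ` and `u j ∈ Y` with
`sup ‖G(v₁,…,vₙ) − Σ_j (Π_i g i j (φ i (q i) (v i))) • u j‖ < ε` over `v i ∈ K i`. -/
theorem stmt_4 {n : ℕ} {X : Fin n → Type*} [∀ i, MetricSpace (X i)]
    {Y : Type*} [NormedAddCommGroup Y] [NormedSpace ℝ Y] [CompleteSpace Y]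
    (κ : Fin n → ℕ → ℕ) (hκ : ∀ i, StrictMono (κ i))
    (φ : ∀ (i : Fin n) (q : ℕ), X i → (Fin (κ i q) → ℝ))
    (ψ : ∀ (i : Fin n) (q : ℕ), (Fin (κ i q) → ℝ) → X i)
    (hφ : ∀ i q, Continuous (φ i q))
    (hψ : ∀ i q, ContinuousOn (ψ i q) (Set.range (φ i q)))
    (hP : ∀ (i : Fin n) (K : Set (X i)), IsCompact K →
      ∀ ε > (0 : ℝ), ∃ N : ℕ, ∀ q ≥ N, ∀ x ∈ K, dist x (ψ i q (φ i q x)) < ε)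
    (K : ∀ i, Set (X i)) (hK : ∀ i, IsCompact (K i))
    (G : (∀ i, X i) → Y) (hG : ContinuousOn G (Set.univ.pi K))
    (ε : ℝ) (hε : 0 < ε) :
    ∃ (p : ℕ) (q : Fin n → ℕ)
      (g : ∀ i : Fin n, Fin p → (Fin (κ i (q i)) → ℝ) → ℝ) (u : Fin p → Y),
      0 < p ∧ (∀ i j, Continuous (g i j)) ∧
      ∀ v ∈ Set.univ.pi K,
        ‖G v - ∑ j : Fin p, (∏ i : Fin n, g i j (φ i (q i) (v i))) • u j‖ < ε := by
  classical
  rcases Nat.eq_zero_or_pos n with h0 | hn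
  · -- degenerate case n = 0
    subst h0
    refine ⟨1, fun i => i.elim0, fun i => i.elim0, fun _ => G (fun i => i.elim0),
      Nat.one_pos, fun i => i.elim0, fun v _ => ?_⟩
    have hv : v = fun i : Fin 0 => i.elim0 := funext fun i => i.elim0
    subst hv
    simp [hε]
  -- main case 0 < n
  obtain ⟨p₀, f, u, hfu⟩ := tensor_approx hn K hK G hG (ε/2) (half_pos hε)
  -- uniform bound on the f's over K
  have hC0 : ∀ ij : Fin n × Fin p₀, ∃ C, 0 ≤ C ∧ ∀ x ∈ K ij.1, |f ij.1 ij.2 x| ≤ C := by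
    intro ij
    obtain ⟨C, hC⟩ := (hK ij.1).exists_bound_of_continuousOn
      ((f ij.1 ij.2).continuous.continuousOn)
    refine ⟨max C 0, le_max_right _ _, fun x hx => ?_⟩
    have := hC x hx
    rw [Real.norm_eq_abs] at this
    exact this.trans (le_max_left _ _)
  choose C0 hC0n hC0b using hC0
  set B : ℝ := 1 + ∑ ij : Fin n × Fin p₀, C0 ij with hBdef
  have hB1 : 1 ≤ B := by
    have : 0 ≤ ∑ ij : Fin n × Fin p₀, C0 ij :=
      Finset.sum_nonneg fun ij _ => hC0n ij
    linarith
  have hBf : ∀ i j, ∀ x ∈ K i, |f i j x| ≤ B - 1 := by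
    intro i j x hx
    have h1 := hC0b (i, j) x hx
    have h2 : C0 (i, j) ≤ ∑ ij : Fin n × Fin p₀, C0 ij :=
      Finset.single_le_sum (fun ij _ => hC0n ij) (Finset.mem_univ (i, j))
    simp only [hBdef]
    linarith
  set D : ℝ := ∑ j : Fin p₀, ‖u j‖ with hDdef
  have hD : 0 ≤ D := Finset.sum_nonneg fun j _ => norm_nonneg _
  set Z : ℝ := (n : ℝ) * B ^ n * D with hZdef
  have hZ : 0 ≤ Z := by
    have : (0:ℝ) ≤ B ^ n := by positivity
    have hn' : (0:ℝ) ≤ (n:ℝ) := Nat.cast_nonneg _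
    exact mul_nonneg (mul_nonneg hn' this) hD
  set η : ℝ := min 1 (ε / (2 * (1 + Z))) with hηdef
  have hηpos : 0 < η := lt_min one_pos (by positivity)
  have hη1 : η ≤ 1 := min_le_left _ _
  have hηZ : η * Z ≤ ε / 2 := by
    have h1 : η ≤ ε / (2 * (1 + Z)) := min_le_right _ _
    have h2 : η * Z ≤ (ε / (2 * (1 + Z))) * Z := mul_le_mul_of_nonneg_right h1 hZ
    have h3 : (ε / (2 * (1 + Z))) * Z ≤ ε / 2 := by
      rw [div_mul_eq_mul_div, div_le_div_iff₀ (by positivity) (by norm_num)]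
      nlinarith
    linarith
  -- choose δ i via uniform continuity near the compact set
  have hδi : ∀ i, ∃ δ > 0, ∀ x ∈ K i, ∀ y, dist x y < δ →
      ∀ j : Fin p₀, |f i j x - f i j y| < η := by
    intro i
    obtain ⟨δ, hδpos, hδ⟩ := unif_near (hK i)
      (f := fun x : X i => fun j : Fin p₀ => f i j x)
      (continuous_pi fun j => (f i j).continuous) hηpos
    refine ⟨δ, hδpos, fun x hx y hxy j => ?_⟩
    have h1 := hδ x hx y hxy
    have h2 := dist_le_pi_dist (fun j : Fin p₀ => f i j x) (fun j : Fin p₀ => f i j y) j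
    rw [Real.dist_eq] at h2
    exact lt_of_le_of_lt h2 h1
  choose δ hδpos hδ using hδi
  -- choose discretization levels
  have hQ : ∀ i, ∃ N, ∀ q ≥ N, ∀ x ∈ K i, dist x (ψ i q (φ i q x)) < δ i :=
    fun i => hP i (K i) (hK i) (δ i) (hδpos i)
  choose q hq using hQ
  have hqi : ∀ i, ∀ x ∈ K i, dist x (ψ i (q i) (φ i (q i) x)) < δ i :=
    fun i => hq i (q i) le_rfl
  -- Tietze extension of f ∘ ψ from the encoder image
  have hgex : ∀ i (j : Fin p₀), ∃ g : C((Fin (κ i (q i)) → ℝ), ℝ),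
      ∀ x ∈ K i, g (φ i (q i) x) = f i j (ψ i (q i) (φ i (q i) x)) := by
    intro i j
    set C := φ i (q i) '' K i with hCdef
    have hCcp : IsCompact C := (hK i).image (hφ i (q i))
    have hCcl : IsClosed C := hCcp.isClosed
    have hsub : C ⊆ Set.range (φ i (q i)) := Set.image_subset_range _ _
    have hcont : ContinuousOn (fun w => f i j (ψ i (q i) w)) C :=
      (f i j).continuous.comp_continuousOn ((hψ i (q i)).mono hsub)
    obtain ⟨g, hg⟩ := (ContinuousMap.mk _ hcont.restrict).exists_restrict_eq hCcl
    refine ⟨g, fun x hx => ?_⟩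
    have hmem : φ i (q i) x ∈ C := Set.mem_image_of_mem _ hx
    have := DFunLike.congr_fun hg ⟨φ i (q i) x, hmem⟩
    simpa using this
  choose g hg using hgex
  -- pad with one extra zero term to ensure positivity of p
  refine ⟨p₀ + 1, q,
    fun i => (Fin.snoc (fun j => ⇑(g i j)) (fun _ => (0:ℝ)) :
      Fin (p₀ + 1) → (Fin (κ i (q i)) → ℝ) → ℝ),
    (Fin.snoc u 0 : Fin (p₀ + 1) → Y), Nat.succ_pos _, ?_, ?_⟩
  · intro i j
    refine Fin.lastCases ?_ ?_ j
    · simp only [Fin.snoc_last]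
      exact continuous_const
    · intro j'
      simp only [Fin.snoc_castSucc]
      exact (g i j').continuous
  intro v hv
  have hvK : ∀ i, v i ∈ K i := fun i => hv i (Set.mem_univ i)
  -- the padded sum reduces to the sum over Fin p₀
  have hsum : ∑ j : Fin (p₀ + 1),
      (∏ i : Fin n, (Fin.snoc (fun j' => ⇑(g i j')) (fun _ => (0:ℝ)) :
          Fin (p₀ + 1) → (Fin (κ i (q i)) → ℝ) → ℝ) j (φ i (q i) (v i)))
        • (Fin.snoc u 0 : Fin (p₀ + 1) → Y) j
      = ∑ j : Fin p₀, (∏ i : Fin n, g i j (φ i (q i) (v i))) • u j := by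
    rw [Fin.sum_univ_castSucc]
    simp only [Fin.snoc_castSucc, Fin.snoc_last, smul_zero, add_zero]
  rw [hsum]
  -- error estimate
  have hterm : ∀ j : Fin p₀,
      |∏ i : Fin n, f i j (v i) - ∏ i : Fin n, g i j (φ i (q i) (v i))|
        ≤ (n : ℝ) * η * B ^ n := by
    intro j
    have := prod_pert_bound (Finset.univ : Finset (Fin n))
      (fun i => f i j (v i)) (fun i => g i j (φ i (q i) (v i))) B η hB1 hηpos.le
      (fun i _ => (hBf i j (v i) (hvK i)).trans (by linarith))
      (fun i _ => ?_) (fun i _ => ?_)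
    · simpa [Finset.card_univ] using this
    · -- |g (φ v)| ≤ B
      beta_reduce
      rw [hg i j (v i) (hvK i)]
      have h1 := hδ i (v i) (hvK i) _ (hqi i (v i) (hvK i)) j
      have h2 := hBf i j (v i) (hvK i)
      have := abs_sub_abs_le_abs_sub (f i j (ψ i (q i) (φ i (q i) (v i)))) (f i j (v i))
      rw [abs_sub_comm] at this
      linarith [abs_nonneg (f i j (ψ i (q i) (φ i (q i) (v i))) - f i j (v i)),
        (abs_sub_abs_le_abs_sub (f i j (ψ i (q i) (φ i (q i) (v i)))) (f i j (v i))).trans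
          (le_of_lt (by rw [abs_sub_comm]; exact h1))]
    · -- |f v - g (φ v)| ≤ η
      beta_reduce
      rw [hg i j (v i) (hvK i)]
      exact (hδ i (v i) (hvK i) _ (hqi i (v i) (hvK i)) j).le
  have h2 : ‖∑ j : Fin p₀, (∏ i : Fin n, f i j (v i)) • u j
      - ∑ j : Fin p₀, (∏ i : Fin n, g i j (φ i (q i) (v i))) • u j‖ ≤ ε / 2 := by
    calc ‖∑ j : Fin p₀, (∏ i : Fin n, f i j (v i)) • u j
          - ∑ j : Fin p₀, (∏ i : Fin n, g i j (φ i (q i) (v i))) • u j‖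
        = ‖∑ j : Fin p₀, ((∏ i : Fin n, f i j (v i))
            - (∏ i : Fin n, g i j (φ i (q i) (v i)))) • u j‖ := by
          rw [← Finset.sum_sub_distrib]
          congr 1
          exact Finset.sum_congr rfl fun j _ => by rw [sub_smul]
      _ ≤ ∑ j : Fin p₀, ‖((∏ i : Fin n, f i j (v i))
            - (∏ i : Fin n, g i j (φ i (q i) (v i)))) • u j‖ := norm_sum_le _ _
      _ ≤ ∑ j : Fin p₀, ((n : ℝ) * η * B ^ n) * ‖u j‖ := by
          refine Finset.sum_le_sum fun j _ => ?_
          rw [norm_smul, Real.norm_eq_abs]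
          exact mul_le_mul_of_nonneg_right (hterm j) (norm_nonneg _)
      _ = η * Z := by
          rw [← Finset.mul_sum, ← hDdef, hZdef]
          ring
      _ ≤ ε / 2 := hηZ
  calc ‖G v - ∑ j : Fin p₀, (∏ i : Fin n, g i j (φ i (q i) (v i))) • u j‖
      = ‖(G v - ∑ j : Fin p₀, (∏ i : Fin n, f i j (v i)) • u j)
          + (∑ j : Fin p₀, (∏ i : Fin n, f i j (v i)) • u j
            - ∑ j : Fin p₀, (∏ i : Fin n, g i j (φ i (q i) (v i))) • u j)‖ := by
        rw [sub_add_sub_cancel]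
    _ ≤ ‖G v - ∑ j : Fin p₀, (∏ i : Fin n, f i j (v i)) • u j‖
          + ‖∑ j : Fin p₀, (∏ i : Fin n, f i j (v i)) • u j
            - ∑ j : Fin p₀, (∏ i : Fin n, g i j (φ i (q i) (v i))) • u j‖ := norm_add_le _ _
    _ < ε / 2 + ε / 2 := by
        have h1 := hfu v hv
        exact add_lt_add_of_lt_of_le h1 h2
    _ = ε := add_halves ε
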